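/- arXiv:1509.04449 — 4 statements merged into one kernel-verified Lean document; each statement's English description precedes it below -/
import Mathlib

section
/- Let F be a finitely generated nontrivial free group and let H be a subgroup of finite index in F. Then r̄(H) = r̄(F) · [F : H], where [F : H] denotes the index of H in F. -/
/-- The rank of a group: the minimal cardinality of a (finite) generating set. -/
noncomputable def grank (G : Type*) [Group G] : ℕ :=
  sInf {n : ℕ | ∃ S : Finset G, S.card = n ∧ Subgroup.closure (S : Set G) = ⊤}

/-- The reduced rank of a group: `max (0, rank - 1)` (truncated subtraction). -/
noncomputable def rbar (G : Type*) [Group G] : ℕ := grank G - 1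



open Cardinal in
lemma card_le_of_gen {β : Type*} (S : Finset (FreeGroup β))
    (hS : Subgroup.closure (S : Set (FreeGroup β)) = ⊤) :
    Finite β ∧ Nat.card β ≤ S.card := by
  classical
  let φ : FreeGroup β →* Multiplicative (β →₀ ℤ) :=
    FreeGroup.lift (fun b => Multiplicative.ofAdd (Finsupp.single b 1))
  set s : Set (β →₀ ℤ) := Multiplicative.toAdd '' (φ '' (S : Set (FreeGroup β))) with hs
  have h1 : ∀ b : β, Finsupp.single b (1:ℤ) ∈ Submodule.span ℤ s := by
    intro b
    have hini : φ (FreeGroup.of b) ∈ Subgroup.closure (φ '' (S : Set (FreeGroup β))) := by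
      rw [← MonoidHom.map_closure, hS]
      exact ⟨FreeGroup.of b, trivial, rfl⟩
    have hle : Subgroup.closure (φ '' (S : Set (FreeGroup β))) ≤
        AddSubgroup.toSubgroup (Submodule.span ℤ s).toAddSubgroup := by
      rw [Subgroup.closure_le]
      intro x hx
      show Multiplicative.toAdd x ∈ Submodule.span ℤ s
      exact Submodule.subset_span ⟨x, hx, rfl⟩
    have := hle hini
    simpa [φ] using this
  have hspan : Submodule.span ℤ s = ⊤ := by
    rw [← top_le_iff, ← (Finsupp.basisSingleOne (R := ℤ) (ι := β)).span_eq, Submodule.span_le]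
    rintro x ⟨b, rfl⟩
    simpa [Finsupp.coe_basisSingleOne] using h1 b
  have hcard : #β ≤ S.card := by
    have h2 : Module.rank ℤ (β →₀ ℤ) ≤ #s := by
      have := rank_span_le (R := ℤ) s
      rwa [hspan, rank_top] at this
    have h3 : (#s) ≤ S.card := by
      calc #s ≤ #(S : Set (FreeGroup β)) := Cardinal.mk_image_le.trans Cardinal.mk_image_le
        _ = S.card := by simp [Cardinal.mk_coe_finset]
    have h4 : Module.rank ℤ (β →₀ ℤ) = #β := by
      simpa using rank_finsupp_self ℤ β
    rw [← h4]; exact h2.trans h3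
  have hfin : Finite β := by
    rw [← Cardinal.lt_aleph0_iff_finite]
    exact hcard.trans_lt (Cardinal.nat_lt_aleph0 _)
  refine ⟨hfin, ?_⟩
  have := Cardinal.toNat_le_toNat hcard (Cardinal.nat_lt_aleph0 _)
  simpa [Nat.card, Cardinal.toNat_natCast] using this

lemma grank_eq_of_basis {ι G : Type*} [Group G] [Group.FG G] (b : FreeGroupBasis ι G) :
    Finite ι ∧ grank G = Nat.card ι := by
  classical
  obtain ⟨S₀, hS₀⟩ := (‹Group.FG G›).out
  have hmem : ∀ n ∈ {n : ℕ | ∃ S : Finset G, S.card = n ∧ Subgroup.closure (S : Set G) = ⊤},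
      Finite ι ∧ Nat.card ι ≤ n := by
    rintro n ⟨S, rfl, hStop⟩
    have hS' : Subgroup.closure ((S.image b.repr : Finset (FreeGroup ι)) : Set (FreeGroup ι)) = ⊤ := by
      rw [Finset.coe_image, ← MulEquiv.coe_toMonoidHom, ← MonoidHom.map_closure, hStop,
        ← MonoidHom.range_eq_map]
      exact MonoidHom.range_eq_top.2 b.repr.surjective
    obtain ⟨hfin, hle⟩ := card_le_of_gen _ hS'
    exact ⟨hfin, hle.trans (Finset.card_image_le)⟩
  have hne : {n : ℕ | ∃ S : Finset G, S.card = n ∧ Subgroup.closure (S : Set G) = ⊤}.Nonempty :=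
    ⟨S₀.card, S₀, rfl, hS₀⟩
  have hmem' := hmem _ (Nat.sInf_mem hne)
  obtain ⟨hfin, hle⟩ := hmem'
  have := Fintype.ofFinite ι
  refine ⟨hfin, le_antisymm ?_ hle⟩
  · apply Nat.sInf_le
    refine ⟨Finset.univ.image (b : ι → G), ?_, ?_⟩
    · rw [Finset.card_image_of_injective _ b.injective, Finset.card_univ, Nat.card_eq_fintype_card]
    · rw [Finset.coe_image, Finset.coe_univ, Set.image_univ]
      have : Subgroup.closure (Set.range (FreeGroup.of : ι → FreeGroup ι)) = ⊤ :=
        FreeGroup.closure_range_of ι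
      have h2 : Set.range (b : ι → G) = b.repr.symm '' (Set.range (FreeGroup.of : ι → FreeGroup ι)) := by
        rw [← Set.range_comp]; rfl
      rw [h2, ← MulEquiv.coe_toMonoidHom, ← MonoidHom.map_closure, this,
        ← MonoidHom.range_eq_map]
      exact MonoidHom.range_eq_top.2 b.repr.symm.surjective

open Quiver

universe v u

section Arb
variable {V : Type u} [Quiver.{v} V] [Arborescence V]

lemma length_path_cons {a b : V} (p : Path (Quiver.root V) a) (q : Path (Quiver.root V) b)
    (e : a ⟶ b) : q.length = p.length + 1 := by
  have h : q = p.cons e := Subsingleton.elim _ _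
  rw [h]; rfl

lemma not_arrow_to_root {a : V} (e : a ⟶ Quiver.root V) : False := by
  have h1 := length_path_cons (default : Path (Quiver.root V) a) Path.nil e
  simp at h1

/-- In an arborescence, arrows biject with non-root vertices (via the target map). -/
noncomputable def totalEquivNonRoot : Total V ≃ {b : V // b ≠ Quiver.root V} := by
  apply Equiv.ofBijective (fun t => ⟨t.right, fun h => not_arrow_to_root (h ▸ t.hom)⟩)
  constructor
  · rintro ⟨a₁, b₁, e₁⟩ ⟨a₂, b₂, e₂⟩ h
    simp only [Subtype.mk.injEq] at h
    subst h
    have h2 : ((default : Path (Quiver.root V) a₁).cons e₁ : Path (Quiver.root V) b₁)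
        = (default : Path (Quiver.root V) a₂).cons e₂ := Subsingleton.elim _ _
    injection h2 with h3 h4 h5 h6
    subst h3
    rw [eq_of_heq h6]
  · rintro ⟨b, hb⟩
    cases h : (default : Path (Quiver.root V) b) with
    | nil => exact absurd rfl hb
    | cons p e => exact ⟨⟨_, _, e⟩, rfl⟩

end Arb

section Tree
variable {V : Type u} [Quiver.{v} V] (T : WideSubquiver (Symmetrify V)) [Arborescence ↥T]

/-- Project an arrow of the spanning tree to the underlying arrow of `V`. -/
def treeProj : Total (↥T) → Total V := fun t =>
  match t with
  | ⟨a, b, ⟨Sum.inl e, _⟩⟩ => ⟨a, b, e⟩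
  | ⟨a, b, ⟨Sum.inr e, _⟩⟩ => ⟨b, a, e⟩

lemma treeProj_injective : Function.Injective (treeProj T) := by
  rintro ⟨a₁, b₁, ⟨e₁' , he₁⟩⟩ ⟨a₂, b₂, ⟨e₂', he₂⟩⟩ h
  have len := fun {a b : ↥T} (e : a ⟶ b) =>
    length_path_cons (default : Path (Quiver.root ↥T) a) (default : Path (Quiver.root ↥T) b) e
  cases e₁' using Sum.casesOn with
  | inl e₁ =>
    cases e₂' using Sum.casesOn with
    | inl e₂ =>
      simp only [treeProj] at h
      injection h with h1 h2 h3
      subst h1; subst h2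
      cases eq_of_heq h3
      rfl
    | inr e₂ =>
      simp only [treeProj] at h
      injection h with h1 h2 h3
      subst h1; subst h2
      have l1 := len ⟨Sum.inl e₁, he₁⟩
      have l2 := len ⟨Sum.inr e₂, he₂⟩
      omega
  | inr e₁ =>
    cases e₂' using Sum.casesOn with
    | inl e₂ =>
      simp only [treeProj] at h
      injection h with h1 h2 h3
      subst h1; subst h2
      have l1 := len ⟨Sum.inr e₁, he₁⟩
      have l2 := len ⟨Sum.inl e₂, he₂⟩
      omega
    | inr e₂ =>
      simp only [treeProj] at h
      injection h with h1 h2 h3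
      subst h1; subst h2
      cases eq_of_heq h3
      rfl

lemma treeProj_range :
    Set.range (treeProj T) =
      (Quiver.wideSubquiverEquivSetTotal (Quiver.wideSubquiverSymmetrify T) : Set (Total V)) := by
  ext ⟨a, b, e⟩
  constructor
  · rintro ⟨⟨a', b', ⟨e', he'⟩⟩, ht⟩
    cases e' using Sum.casesOn with
    | inl e₀ =>
      simp only [treeProj] at ht
      injection ht with h1 h2 h3
      subst h1; subst h2
      rw [← eq_of_heq h3]
      exact Or.inl he'
    | inr e₀ =>
      simp only [treeProj] at ht
      injection ht with h1 h2 h3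
      subst h1; subst h2
      rw [← eq_of_heq h3]
      exact Or.inr he'
  · rintro (h | h)
    · exact ⟨⟨a, b, ⟨Sum.inl e, h⟩⟩, rfl⟩
    · exact ⟨⟨b, a, ⟨Sum.inr e, h⟩⟩, rfl⟩

noncomputable def treeEquiv :
    Total (↥T) ≃ (Quiver.wideSubquiverEquivSetTotal (Quiver.wideSubquiverSymmetrify T) : Set (Total V)) :=
  (Equiv.ofInjective _ (treeProj_injective T)).trans (Equiv.setCongr (treeProj_range T))

end Tree


open scoped Classical
open CategoryTheory CategoryTheory.ActionCategory CategoryTheory.SingleObj Quiver FreeGroup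
open IsFreeGroupoid IsFreeGroupoid.SpanningTree

/-- Copy of `IsFreeGroupoid.SpanningTree.endIsFree` producing the basis as data. -/
noncomputable def endBasis {G : Type u} [Groupoid.{u} G] [IsFreeGroupoid G]
    (T : WideSubquiver (Symmetrify <| IsFreeGroupoid.Generators G)) [Arborescence T] :
    FreeGroupBasis
      ((wideSubquiverEquivSetTotal <| wideSubquiverSymmetrify T)ᶜ : Set _)
      (CategoryTheory.End (show G from Quiver.root T)) :=
  FreeGroupBasis.ofUniqueLift ((wideSubquiverEquivSetTotal <| wideSubquiverSymmetrify T)ᶜ : Set _)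
    (fun e => loopOfHom T (IsFreeGroupoid.of e.val.hom))
    (by
      intro X _ f
      let f' : Labelling (IsFreeGroupoid.Generators G) X := fun a b e =>
        if h : e ∈ wideSubquiverSymmetrify T a b then 1 else f ⟨⟨a, b, e⟩, h⟩
      rcases IsFreeGroupoid.unique_lift f' with ⟨F', hF', uF'⟩
      refine ⟨F'.mapEnd _, ?_, ?_⟩
      · suffices ∀ {x y} (q : x ⟶ y), F'.map (loopOfHom T q) = (F'.map q : X) by
          rintro ⟨⟨a, b, e⟩, h⟩
          erw [Functor.mapEnd_apply, this, hF']
          exact dif_neg h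
        intros x y q
        suffices ∀ {a : G} (p : Path (Quiver.root T) a), F'.map (homOfPath T p) = 1 by
          simp only [this, treeHom, comp_as_mul, inv_as_inv, loopOfHom, inv_one, mul_one,
            one_mul, Functor.map_inv, Functor.map_comp]
        intro a p
        induction' p with b c p e ih
        · exact F'.map_id _
        erw [homOfPath, F'.map_comp, comp_as_mul, ih, mul_one]
        rcases e with ⟨e | e, eT⟩
        · erw [hF']
          exact dif_pos (Or.inl eT)
        · erw [F'.map_inv, inv_as_inv, inv_eq_one, hF']
          exact dif_pos (Or.inr eT)
      · intro E hE
        ext x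
        suffices (functorOfMonoidHom T E).map x = F'.map x by
          have tr : treeHom T (show G from Quiver.root T) = 𝟙 _ := treeHom_root T
          simp only [loopOfHom, functorOfMonoidHom, tr, IsIso.inv_id,
            Category.id_comp] at this
          erw [Category.id_comp, IsIso.inv_id, Category.comp_id] at this
          exact this
        congr
        apply uF'
        intro a b e
        change E (loopOfHom T _) = dite _ _ _
        split_ifs with h
        · rw [loopOfHom_eq_id T e h, ← End.one_def]
          exact E.map_one
        · exact hE ⟨⟨a, b, e⟩, h⟩)

section ActionCount
open CategoryTheory CategoryTheory.ActionCategory Quiver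

variable (F : Type u) [Group F] [IsFreeGroup F] (A : Type u) [MulAction F A]

/-- The arrows of the generating quiver of the action groupoid biject with `A × Generators F`. -/
def totalToProd :
    Total (IsFreeGroupoid.Generators (CategoryTheory.ActionCategory F A)) →
      A × IsFreeGroup.Generators F := fun t =>
  (ActionCategory.back (show ActionCategory F A from t.left),
    (show {e : IsFreeGroup.Generators F //
      IsFreeGroup.of e • (ActionCategory.back (show ActionCategory F A from t.left))
        = ActionCategory.back (show ActionCategory F A from t.right)} from t.hom).val)

lemma totalToProd_bijective : Function.Bijective (totalToProd F A) := by
  constructor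
  · rintro ⟨a₁, b₁, ⟨s₁, h₁⟩⟩ ⟨a₂, b₂, ⟨s₂, h₂⟩⟩ h
    simp only [totalToProd, Prod.mk.injEq] at h
    obtain ⟨hq, hs⟩ := h
    have ha : a₁ = a₂ := by
      have := congrArg (fun q => (show A → ActionCategory F A from fun y => ⟨⟨⟩, y⟩) q) hq
      exact this
    subst ha
    subst hs
    have hb : b₁ = b₂ := by
      have hback : ActionCategory.back (show ActionCategory F A from b₁)
          = ActionCategory.back (show ActionCategory F A from b₂) := by
        rw [← h₁, ← h₂]
      have := congrArg (fun q => (show A → ActionCategory F A from fun y => ⟨⟨⟩, y⟩) q) hback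
      exact this
    subst hb
    rfl
  · rintro ⟨q, s⟩
    exact ⟨⟨objEquiv F A q, objEquiv F A (IsFreeGroup.of s • q), ⟨s, rfl⟩⟩, rfl⟩

end ActionCount

/-- If `F` is a finitely generated nontrivial free group and `H` has finite index in `F`,
then `r̄(H) = r̄(F) · [F : H]`. -/
theorem rbar_of_finite_index (F : Type*) [Group F] [IsFreeGroup F] [Group.FG F] [Nontrivial F]
    (H : Subgroup F) (hHind : H.FiniteIndex) :
    rbar ↥H = rbar F * H.index := by
  classical
  haveI := hHind
  haveI : Group.FG ↥H := H.fg_of_index_ne_zero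
  obtain ⟨hfinF, hgrankF⟩ := grank_eq_of_basis (IsFreeGroup.basis F)
  set r : ℕ := Nat.card (IsFreeGroup.Generators F) with hr
  set n : ℕ := H.index with hn
  set A := F ⧸ H with hA
  set Gp := CategoryTheory.ActionCategory F A with hGp
  set x : Gp := CategoryTheory.ActionCategory.objEquiv F A ↑(1 : F) with hx
  haveI hconn : CategoryTheory.IsConnected Gp :=
    inferInstanceAs (CategoryTheory.IsConnected (CategoryTheory.ActionCategory F (F ⧸ H)))
  haveI : Quiver.RootedConnected (show Symmetrify (IsFreeGroupoid.Generators Gp) from x) :=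
    @IsFreeGroupoid.generators_connected Gp _ hconn _ x
  set T : WideSubquiver (Symmetrify (IsFreeGroupoid.Generators Gp)) :=
    Quiver.geodesicSubtree (show Symmetrify (IsFreeGroupoid.Generators Gp) from x) with hT
  letI : Arborescence ↥T := Quiver.geodesicArborescence _
  -- transport the basis of the spanning-tree complement to `H`
  let b1 : FreeGroupBasis
      ((Quiver.wideSubquiverEquivSetTotal <| Quiver.wideSubquiverSymmetrify T)ᶜ :
        Set (Quiver.Total (IsFreeGroupoid.Generators Gp))) ↥H :=
    (endBasis T).map (CategoryTheory.ActionCategory.endMulEquivSubgroup H)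
  obtain ⟨hfinC, hgrankH⟩ := grank_eq_of_basis b1
  -- finiteness
  haveI : Finite A := H.finite_quotient_of_finiteIndex
  haveI hfinGp : Finite (IsFreeGroupoid.Generators Gp) :=
    Finite.of_equiv A (show A ≃ IsFreeGroupoid.Generators Gp from
      CategoryTheory.ActionCategory.objEquiv F A)
  haveI : Finite (Quiver.Total (IsFreeGroupoid.Generators Gp)) :=
    Finite.of_injective _ (totalToProd_bijective F A).injective
  -- cardinalities
  have hcardV : Nat.card (IsFreeGroupoid.Generators Gp) = n := by
    rw [hn, Subgroup.index]
    exact Nat.card_congr (show IsFreeGroupoid.Generators Gp ≃ A from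
      (CategoryTheory.ActionCategory.objEquiv F A).symm)
  have hcardTot : Nat.card (Quiver.Total (IsFreeGroupoid.Generators Gp)) = n * r := by
    have h1 : Nat.card A = n := rfl
    rw [Nat.card_eq_of_bijective _ (totalToProd_bijective F A), Nat.card_prod, h1, hr]
  have hn1 : 1 ≤ n := Nat.one_le_iff_ne_zero.2 hHind.index_ne_zero
  -- the tree has `n - 1` edges
  have hcardE : Nat.card
      ((Quiver.wideSubquiverEquivSetTotal <| Quiver.wideSubquiverSymmetrify T) :
        Set (Quiver.Total (IsFreeGroupoid.Generators Gp))) = n - 1 := by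
    rw [← Nat.card_congr (treeEquiv T), Nat.card_congr (totalEquivNonRoot (V := ↥T))]
    haveI : Finite (↥T : Type _) := hfinGp
    haveI : Fintype (↥T : Type _) := Fintype.ofFinite _
    rw [Nat.card_eq_fintype_card]
    have : Fintype.card {b : ↥T // b ≠ Quiver.root ↥T}
        = Fintype.card (↥T : Type _) - Fintype.card {b : ↥T // b = Quiver.root ↥T} := by
      exact Fintype.card_subtype_compl _
    rw [this, Fintype.card_subtype_eq, ← Nat.card_eq_fintype_card]
    have : Nat.card (↥T : Type _) = n := hcardV
    rw [this]
  -- the complement has `n * r - (n - 1)` elements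
  have hcardC : Nat.card
      ((Quiver.wideSubquiverEquivSetTotal <| Quiver.wideSubquiverSymmetrify T)ᶜ :
        Set (Quiver.Total (IsFreeGroupoid.Generators Gp))) = n * r - (n - 1) := by
    have h := Set.ncard_add_ncard_compl
      ((Quiver.wideSubquiverEquivSetTotal <| Quiver.wideSubquiverSymmetrify T) :
        Set (Quiver.Total (IsFreeGroupoid.Generators Gp)))
    rw [← Nat.card_coe_set_eq, ← Nat.card_coe_set_eq, hcardE, hcardTot] at h
    omega
  -- `r ≥ 1` because `F` is nontrivial
  have hr1 : 1 ≤ r := by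
    by_contra hc
    have hr0 : r = 0 := by omega
    have h0 : grank F = 0 := hgrankF.trans hr0
    obtain ⟨S₀, hS₀⟩ := (‹Group.FG F›).out
    have hne : {m : ℕ | ∃ S : Finset F, S.card = m ∧ Subgroup.closure (S : Set F) = ⊤}.Nonempty :=
      ⟨S₀.card, S₀, rfl, hS₀⟩
    have hmem := Nat.sInf_mem hne
    rw [show sInf {m : ℕ | ∃ S : Finset F, S.card = m ∧ Subgroup.closure (S : Set F) = ⊤}
        = grank F from rfl, h0] at hmem
    obtain ⟨S, hScard, hStop⟩ := hmem
    rw [Finset.card_eq_zero] at hScard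
    subst hScard
    simp only [Finset.coe_empty, Subgroup.closure_empty] at hStop
    obtain ⟨g, hg⟩ := exists_ne (1 : F)
    have hmem0 : g ∈ (⊥ : Subgroup F) := by rw [hStop]; trivial
    exact hg (by simpa using hmem0)
  -- conclude
  have hH : grank ↥H = n * r - (n - 1) := hgrankH.trans hcardC
  have hF : grank F = r := hgrankF
  rw [rbar, rbar, hH, hF]
  rw [Nat.sub_sub, Nat.sub_add_cancel hn1, Nat.sub_one_mul, mul_comm r n]
end

section
/- There exist a finitely generated free group F and finitely generated subgroups H, K of F such that r̄(H ∨ K) · r̄(H ∩ K) > r̄(H) · r̄(K). That is, the inequality r̄(H ∨ K) · r̄(H ∩ K) ≤ r̄(H) · r̄(K) fails in general for finitely generated subgroups of free groups. -/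
open Subgroup Multiplicative

private abbrev V3 : Type := Fin 3 → ZMod 2

/-- standard basis vectors of `(ZMod 2)^3`. -/
private def E (i : Fin 3) : V3 := fun j => if j = i then 1 else 0

private lemma mem_add_closure (v : V3) : v ∈ AddSubgroup.closure {E 0, E 1, E 2} := by
  have hv : v = (v 0).val • E 0 + ((v 1).val • E 1 + (v 2).val • E 2) := by
    funext j
    simp only [Pi.add_apply, Pi.smul_apply, E]
    fin_cases j <;> simp [nsmul_eq_mul, ZMod.natCast_val, ZMod.cast_id]
  rw [hv]
  have h0 : E 0 ∈ AddSubgroup.closure ({E 0, E 1, E 2} : Set V3) :=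
    AddSubgroup.subset_closure (by simp)
  have h1 : E 1 ∈ AddSubgroup.closure ({E 0, E 1, E 2} : Set V3) :=
    AddSubgroup.subset_closure (by simp)
  have h2 : E 2 ∈ AddSubgroup.closure ({E 0, E 1, E 2} : Set V3) :=
    AddSubgroup.subset_closure (by simp)
  exact add_mem (AddSubgroup.nsmul_mem _ h0 _)
    (add_mem (AddSubgroup.nsmul_mem _ h1 _) (AddSubgroup.nsmul_mem _ h2 _))

/-- Any subset of `Multiplicative (ZMod 2)^3` containing the three basis vectors
generates the whole group. -/
private lemma closure_eq_top_of_basis_subset (s : Set (Multiplicative V3))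
    (h0 : ofAdd (E 0) ∈ s) (h1 : ofAdd (E 1) ∈ s) (h2 : ofAdd (E 2) ∈ s) :
    Subgroup.closure s = ⊤ := by
  rw [eq_top_iff']
  intro v
  have hmem := mem_add_closure v.toAdd
  have key : ∀ w : V3, w ∈ AddSubgroup.closure ({E 0, E 1, E 2} : Set V3) →
      ofAdd w ∈ Subgroup.closure s := by
    intro w hw
    refine AddSubgroup.closure_induction ?_ ?_ ?_ ?_ hw
    · rintro x hx
      rcases hx with rfl | rfl | rfl
      · exact subset_closure h0
      · exact subset_closure h1
      · exact subset_closure h2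
    · exact one_mem _
    · intro x y _ _ hx hy
      exact mul_mem hx hy
    · intro x _ hx
      exact inv_mem hx
  simpa using key v.toAdd hmem

/-- Any finite generating set of `Multiplicative (ZMod 2)^3` has at least 3 elements. -/
private lemma three_le_card_of_gen (S : Finset (Multiplicative V3))
    (hS : Subgroup.closure (S : Set (Multiplicative V3)) = ⊤) : 3 ≤ S.card := by
  classical
  set S' : Finset V3 := S.image Multiplicative.toAdd with hS'def
  have hspan : Submodule.span (ZMod 2) (S' : Set V3) = ⊤ := by
    rw [eq_top_iff]
    intro v _
    have hv : (ofAdd v) ∈ Subgroup.closure (S : Set (Multiplicative V3)) := by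
      rw [hS]; trivial
    have key : ∀ x : Multiplicative V3, x ∈ Subgroup.closure (S : Set (Multiplicative V3)) →
        x.toAdd ∈ Submodule.span (ZMod 2) (S' : Set V3) := by
      intro x hx
      refine Subgroup.closure_induction ?_ ?_ ?_ ?_ hx
      · intro y hy
        apply Submodule.subset_span
        simp only [hS'def, Finset.coe_image]
        exact Set.mem_image_of_mem _ hy
      · simpa using Submodule.zero_mem _
      · intro x y _ _ hx hy
        simpa [toAdd_mul] using Submodule.add_mem _ hx hy
      · intro x _ hx
        simpa using Submodule.neg_mem _ hx
    simpa using key (ofAdd v) hv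
  have hfr : Module.finrank (ZMod 2) V3 = 3 := Module.finrank_fin_fun (ZMod 2)
  have hle : Module.finrank (ZMod 2) (Submodule.span (ZMod 2) ((S' : Set V3))) ≤ S'.card :=
    finrank_span_finset_le_card S'
  rw [hspan] at hle
  rw [finrank_top] at hle
  rw [hfr] at hle
  exact le_trans (le_trans hle (le_refl _)) Finset.card_image_le

/-- A finite set `s` gives a generating finset of the subgroup it generates. -/
private lemma exists_gen_finset {G : Type*} [Group G] (s : Finset G) :
    ∃ S : Finset ↥(Subgroup.closure (s : Set G)), S.card ≤ s.card ∧
      Subgroup.closure (S : Set ↥(Subgroup.closure (s : Set G))) = ⊤ := by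
  classical
  set f : {x // x ∈ s} → ↥(Subgroup.closure (s : Set G)) :=
    fun x => ⟨x.1, Subgroup.subset_closure x.2⟩ with hf_def
  refine ⟨s.attach.image f, le_trans Finset.card_image_le (by simp), ?_⟩
  have hset : ((s.attach.image f : Finset ↥(Subgroup.closure (s : Set G))) :
      Set ↥(Subgroup.closure (s : Set G))) =
      ((↑) : ↥(Subgroup.closure (s : Set G)) → G) ⁻¹' (s : Set G) := by
    ext x
    simp only [Finset.coe_image, Set.mem_image, Finset.mem_coe, Finset.mem_attach,
      Set.mem_preimage, true_and]
    constructor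
    · rintro ⟨a, rfl⟩
      exact a.2
    · intro hx
      exact ⟨⟨x.1, hx⟩, rfl⟩
  rw [hset]
  exact Subgroup.closure_closure_coe_preimage

private lemma grank_closure_le {G : Type*} [Group G] (s : Finset G) :
    grank ↥(Subgroup.closure (s : Set G)) ≤ s.card := by
  obtain ⟨S, hc, ht⟩ := exists_gen_finset s
  exact le_trans (Nat.sInf_le ⟨S, rfl, ht⟩) hc

/-- If a group surjects onto `Multiplicative (ZMod 2)^3` then its rank is at least 3. -/
private lemma three_le_grank {W : Type*} [Group W] (f : W →* Multiplicative V3)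
    (hf : Function.Surjective f) (S₀ : Finset W)
    (h₀ : Subgroup.closure (S₀ : Set W) = ⊤) : 3 ≤ grank W := by
  classical
  have hne : {n : ℕ | ∃ S : Finset W, S.card = n ∧
      Subgroup.closure (S : Set W) = ⊤}.Nonempty := ⟨S₀.card, S₀, rfl, h₀⟩
  rw [grank]
  refine le_csInf hne ?_
  rintro n ⟨S, rfl, hS⟩
  have hmap : Subgroup.map f ⊤ = ⊤ := by
    rw [← MonoidHom.range_eq_map]
    exact MonoidHom.range_eq_top.2 hf
  have himg : Subgroup.closure ((S.image f : Finset (Multiplicative V3)) :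
      Set (Multiplicative V3)) = ⊤ := by
    rw [Finset.coe_image, ← MonoidHom.map_closure, hS, hmap]
  exact le_trans (three_le_card_of_gen _ himg) Finset.card_image_le

/-- The cyclic shift on `(ZMod 2)^3`. -/
private def shiftE : V3 ≃+ V3 where
  toFun v := fun i => v (i + 1)
  invFun v := fun i => v (i - 1)
  left_inv v := by funext i; simp
  right_inv v := by funext i; simp
  map_add' u v := rfl

private def σM : MulAut (Multiplicative V3) := AddEquiv.toMultiplicative shiftE

private def actZ : Multiplicative ℤ →* MulAut (Multiplicative V3) :=
  zpowersHom _ σM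

private lemma shiftE_E0 : shiftE (E 0) = E 2 := by
  funext i; fin_cases i <;> rfl

private lemma shiftE_E2 : shiftE (E 2) = E 1 := by
  funext i; fin_cases i <;> rfl

/-- There are a finitely generated free group (one may take `FreeGroup (Fin n)`) and
finitely generated subgroups `H, K` with `r̄(H ∨ K) · r̄(H ∩ K) > r̄(H) · r̄(K)`:
the inclusion/exclusion Hanna Neumann inequality fails in general. -/
theorem iehnc_fails :
    ∃ (n : ℕ) (H K : Subgroup (FreeGroup (Fin n))),
      H.FG ∧ K.FG ∧ rbar ↥H * rbar ↥K < rbar ↥(H ⊔ K) * rbar ↥(H ⊓ K) := by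
  classical
  set a : FreeGroup (Fin 3) := FreeGroup.of 0 with ha_def
  set b : FreeGroup (Fin 3) := FreeGroup.of 1 with hb_def
  set c : FreeGroup (Fin 3) := FreeGroup.of 2 with hc_def
  set m2 : FreeGroup (Fin 3) := a * b * a⁻¹ with hm2_def
  set m3 : FreeGroup (Fin 3) := a * m2 * a⁻¹ with hm3_def
  set sH : Finset (FreeGroup (Fin 3)) := {a, b} with hsH_def
  set sK : Finset (FreeGroup (Fin 3)) := {b, m2, m3, c} with hsK_def
  set sM : Finset (FreeGroup (Fin 3)) := {b, m2, m3} with hsM_def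
  set sJ : Finset (FreeGroup (Fin 3)) := {a, b, c} with hsJ_def
  set H : Subgroup (FreeGroup (Fin 3)) := Subgroup.closure (sH : Set _) with hH_def
  set K : Subgroup (FreeGroup (Fin 3)) := Subgroup.closure (sK : Set _) with hK_def
  set M : Subgroup (FreeGroup (Fin 3)) := Subgroup.closure (sM : Set _) with hM_def
  set J : Subgroup (FreeGroup (Fin 3)) := Subgroup.closure (sJ : Set _) with hJ_def
  -- memberships of generators
  have haH : a ∈ H := Subgroup.subset_closure (by simp [hsH_def])
  have hbH : b ∈ H := Subgroup.subset_closure (by simp [hsH_def])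
  have hm2H : m2 ∈ H := by
    rw [hm2_def]; exact mul_mem (mul_mem haH hbH) (inv_mem haH)
  have hm3H : m3 ∈ H := by
    rw [hm3_def]; exact mul_mem (mul_mem haH hm2H) (inv_mem haH)
  -- the retraction killing c
  set ρ : FreeGroup (Fin 3) →* FreeGroup (Fin 3) :=
    FreeGroup.lift (fun i => if i = 0 then a else if i = 1 then b else 1) with hρ_def
  have hρa : ρ a = a := by rw [ha_def, hρ_def]; simp [FreeGroup.lift_apply_of, ha_def]
  have hρb : ρ b = b := by rw [hb_def, hρ_def]; simp [FreeGroup.lift_apply_of, hb_def]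
  have hρc : ρ c = 1 := by rw [hc_def, hρ_def]; simp [FreeGroup.lift_apply_of]
  have hρm2 : ρ m2 = m2 := by rw [hm2_def]; simp [map_mul, map_inv, hρa, hρb]
  have hρm3 : ρ m3 = m3 := by rw [hm3_def]; simp [map_mul, map_inv, hρa, hρm2]
  have hfix : ∀ x ∈ H, ρ x = x := by
    intro x hx
    rw [hH_def] at hx
    refine Subgroup.closure_induction ?_ ?_ ?_ ?_ hx
    · intro y hy
      simp only [hsH_def, Finset.coe_insert, Finset.coe_singleton, Set.mem_insert_iff,
        Set.mem_singleton_iff] at hy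
      rcases hy with rfl | rfl
      · exact hρa
      · exact hρb
    · exact map_one ρ
    · intro x y _ _ hx hy; rw [map_mul, hx, hy]
    · intro x _ hx; rw [map_inv, hx]
  -- H ⊓ K = M
  have hmeet : H ⊓ K = M := by
    apply le_antisymm
    · rintro x ⟨hxH, hxK⟩
      have hx1 : ρ x ∈ Subgroup.map ρ K := ⟨x, hxK, rfl⟩
      have hx2 : Subgroup.map ρ K ≤ M := by
        rw [hK_def, MonoidHom.map_closure]
        apply Subgroup.closure_le _ |>.2
        rintro y ⟨g, hg, rfl⟩
        simp only [hsK_def, Finset.coe_insert, Finset.coe_singleton, Set.mem_insert_iff,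
          Set.mem_singleton_iff] at hg
        rcases hg with rfl | rfl | rfl | rfl
        · rw [hρb]; exact Subgroup.subset_closure (by simp [hsM_def])
        · rw [hρm2]; exact Subgroup.subset_closure (by simp [hsM_def])
        · rw [hρm3]; exact Subgroup.subset_closure (by simp [hsM_def])
        · rw [hρc]; exact one_mem _
      rw [← hfix x hxH]
      exact hx2 hx1
    · rw [hM_def]
      apply Subgroup.closure_le _ |>.2
      intro y hy
      simp only [hsM_def, Finset.coe_insert, Finset.coe_singleton, Set.mem_insert_iff,
        Set.mem_singleton_iff] at hy
      have hyK : y ∈ K := by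
        rcases hy with rfl | rfl | rfl <;>
          exact Subgroup.subset_closure (by simp [hsK_def])
      have hyH : y ∈ H := by
        rcases hy with rfl | rfl | rfl
        · exact hbH
        · exact hm2H
        · exact hm3H
      exact ⟨hyH, hyK⟩
  -- J = ⊤ and H ⊔ K = J
  have hJtop : J = ⊤ := by
    rw [eq_top_iff, ← FreeGroup.closure_range_of (Fin 3)]
    apply Subgroup.closure_le _ |>.2
    rintro y ⟨i, rfl⟩
    fin_cases i
    · exact Subgroup.subset_closure (by simp [hsJ_def, ha_def, hb_def, hc_def])
    · exact Subgroup.subset_closure (by simp [hsJ_def, ha_def, hb_def, hc_def])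
    · exact Subgroup.subset_closure (by simp [hsJ_def, ha_def, hb_def, hc_def])
  have hjoin : H ⊔ K = J := by
    apply le_antisymm
    · rw [hJtop]; exact le_top
    · rw [hJ_def]
      apply Subgroup.closure_le _ |>.2
      intro y hy
      simp only [hsJ_def, Finset.coe_insert, Finset.coe_singleton, Set.mem_insert_iff,
        Set.mem_singleton_iff] at hy
      rcases hy with rfl | rfl | rfl
      · exact Subgroup.mem_sup_left haH
      · exact Subgroup.mem_sup_left hbH
      · exact Subgroup.mem_sup_right (Subgroup.subset_closure (by simp [hsK_def]))
  -- upper bounds on ranks of H and K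
  have hgH : grank ↥H ≤ 2 := by
    refine le_trans (grank_closure_le sH) ?_
    rw [hsH_def]
    refine le_trans (Finset.card_insert_le _ _) ?_
    simp
  have hgK : grank ↥K ≤ 4 := by
    refine le_trans (grank_closure_le sK) ?_
    rw [hsK_def]
    refine le_trans (Finset.card_insert_le _ _) (Nat.succ_le_succ ?_)
    refine le_trans (Finset.card_insert_le _ _) (Nat.succ_le_succ ?_)
    refine le_trans (Finset.card_insert_le _ _) (Nat.succ_le_succ ?_)
    simp
  -- abelianization map onto (ZMod 2)^3
  set π₂ : FreeGroup (Fin 3) →* Multiplicative V3 :=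
    FreeGroup.lift (fun i => ofAdd (E i)) with hπ₂_def
  have hπ₂of : ∀ i : Fin 3, π₂ (FreeGroup.of i) = ofAdd (E i) := by
    intro i; rw [hπ₂_def]; exact FreeGroup.lift_apply_of
  -- lower bound for the join
  have hgJ : 3 ≤ grank ↥J := by
    obtain ⟨S₀, _, h₀⟩ := exists_gen_finset sJ
    refine three_le_grank (π₂.comp J.subtype) ?_ S₀ h₀
    rw [← MonoidHom.range_eq_top, eq_top_iff,
      ← closure_eq_top_of_basis_subset {ofAdd (E 0), ofAdd (E 1), ofAdd (E 2)}
        (by simp) (by simp) (by simp)]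
    apply Subgroup.closure_le _ |>.2
    intro y hy
    simp only [Set.mem_insert_iff, Set.mem_singleton_iff] at hy
    have hmem : ∀ i : Fin 3, FreeGroup.of i ∈ J := by
      intro i; rw [hJtop]; trivial
    rcases hy with rfl | rfl | rfl
    · exact ⟨⟨FreeGroup.of 0, hmem 0⟩, hπ₂of 0⟩
    · exact ⟨⟨FreeGroup.of 1, hmem 1⟩, hπ₂of 1⟩
    · exact ⟨⟨FreeGroup.of 2, hmem 2⟩, hπ₂of 2⟩
  -- the semidirect product certificate for M
  set φ : FreeGroup (Fin 3) →* (Multiplicative V3 ⋊[actZ] Multiplicative ℤ) :=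
    FreeGroup.lift (fun i => if i = 0 then SemidirectProduct.inr (ofAdd (1 : ℤ))
      else if i = 1 then SemidirectProduct.inl (ofAdd (E 0)) else 1) with hφ_def
  have hφa : φ a = SemidirectProduct.inr (ofAdd (1 : ℤ)) := by
    rw [ha_def, hφ_def]; simp [FreeGroup.lift_apply_of]
  have hφb : φ b = SemidirectProduct.inl (ofAdd (E 0)) := by
    rw [hb_def, hφ_def]; simp [FreeGroup.lift_apply_of]
  have hφc : φ c = 1 := by
    rw [hc_def, hφ_def]; simp [FreeGroup.lift_apply_of]
  have hconj : ∀ v : V3, φ a * SemidirectProduct.inl (ofAdd v) * (φ a)⁻¹ =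
      SemidirectProduct.inl (ofAdd (shiftE v)) := by
    intro v
    rw [hφa, ← map_inv, ← SemidirectProduct.inl_aut]
    congr 1
  have hφm2 : φ m2 = SemidirectProduct.inl (ofAdd (E 2)) := by
    rw [hm2_def, map_mul, map_mul, map_inv, hφb, hconj (E 0), shiftE_E0]
  have hφm3 : φ m3 = SemidirectProduct.inl (ofAdd (E 1)) := by
    rw [hm3_def, map_mul, map_mul, map_inv, hφm2, hconj (E 2), shiftE_E2]
  -- map φ M = map inl ⊤
  have hmapM : Subgroup.map φ M = Subgroup.map
      (SemidirectProduct.inl : Multiplicative V3 →* _) ⊤ := by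
    rw [hM_def, MonoidHom.map_closure,
      ← closure_eq_top_of_basis_subset {ofAdd (E 0), ofAdd (E 1), ofAdd (E 2)}
        (by simp) (by simp) (by simp),
      MonoidHom.map_closure]
    congr 1
    ext x
    simp only [hsM_def, Finset.coe_insert, Finset.coe_singleton, Set.image_insert_eq,
      Set.image_singleton, hφb, hφm2, hφm3, Set.mem_insert_iff, Set.mem_singleton_iff]
    tauto
  -- surjection from M onto (ZMod 2)^3
  have hgM : 3 ≤ grank ↥M := by
    set g : ↥M →* (Multiplicative V3 ⋊[actZ] Multiplicative ℤ) := φ.comp M.subtype with hg_def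
    have hrange : g.range = Subgroup.map
        (SemidirectProduct.inl : Multiplicative V3 →* _) ⊤ := by
      rw [hg_def, MonoidHom.range_comp, Subgroup.range_subtype, hmapM]
    set e1 : ↥g.range ≃* ↥(Subgroup.map
        (SemidirectProduct.inl : Multiplicative V3 →* _) ⊤) :=
      MulEquiv.subgroupCongr hrange with he1_def
    set e2 : ↥((⊤ : Subgroup (Multiplicative V3))) ≃* ↥(Subgroup.map
        (SemidirectProduct.inl : Multiplicative V3 →* _) ⊤) :=
      Subgroup.equivMapOfInjective ⊤
        (SemidirectProduct.inl : Multiplicative V3 →* (Multiplicative V3 ⋊[actZ] Multiplicative ℤ))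
        SemidirectProduct.inl_injective with he2_def
    set f : ↥M →* Multiplicative V3 :=
      (Subgroup.topEquiv.toMonoidHom.comp (e2.symm.toMonoidHom.comp
        (e1.toMonoidHom.comp g.rangeRestrict))) with hf_def
    have hfsurj : Function.Surjective f := by
      rw [hf_def]
      exact Subgroup.topEquiv.surjective.comp (e2.symm.surjective.comp
        (e1.surjective.comp g.rangeRestrict_surjective))
    obtain ⟨S₀, _, h₀⟩ := exists_gen_finset sM
    exact three_le_grank f hfsurj S₀ h₀
  -- conclusion
  refine ⟨3, H, K, ⟨sH, rfl⟩, ⟨sK, rfl⟩, ?_⟩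
  rw [hjoin, hmeet]
  have r1 : rbar ↥H ≤ 1 := by rw [rbar]; omega
  have r2 : rbar ↥K ≤ 3 := by rw [rbar]; omega
  have r3 : 2 ≤ rbar ↥J := by rw [rbar]; omega
  have r4 : 2 ≤ rbar ↥M := by rw [rbar]; omega
  have l1 : rbar ↥H * rbar ↥K ≤ 1 * 3 := Nat.mul_le_mul r1 r2
  have l2 : 2 * 2 ≤ rbar ↥J * rbar ↥M := Nat.mul_le_mul r3 r4
  omega
end

section
/- Let ℓ ≥ 1 and v ≥ 2 be integers, and let F be the free group on generators x₁, x₂, …, x_{ℓ+2}. Let H be the subgroup generated by the elements x₁^i x₂ x₁^{-(i+1)} for 0 ≤ i ≤ v−2 together with x₃, x₄, …, x_{ℓ+2}, and let K be the subgroup generated by x₁ and x₂. Then H ∩ K is the subgroup generated by the elements x₁^i x₂ x₁^{-(i+1)} for 0 ≤ i ≤ v−2. -/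
/-- With `H = ⟨x₁ⁱx₂x₁^{-(i+1)} (0 ≤ i ≤ v-2), x₃, …, x_{ℓ+2}⟩` and `K = ⟨x₁, x₂⟩`
in the free group on `x₁, …, x_{ℓ+2}`, the intersection `H ∩ K` is generated by
the elements `x₁ⁱx₂x₁^{-(i+1)}` for `0 ≤ i ≤ v-2`. -/
theorem inf_eq_closure (ℓ v : ℕ) (hℓ : 1 ≤ ℓ) (hv : 2 ≤ v)
    (x₁ x₂ : FreeGroup (Fin (ℓ + 2)))
    (hx₁ : x₁ = FreeGroup.of ⟨0, by omega⟩)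
    (hx₂ : x₂ = FreeGroup.of ⟨1, by omega⟩)
    (H K : Subgroup (FreeGroup (Fin (ℓ + 2))))
    (hH : H = Subgroup.closure
      ({g | ∃ i : ℕ, i ≤ v - 2 ∧ g = x₁ ^ (i : ℤ) * x₂ * x₁ ^ (-((i : ℤ) + 1))} ∪
       {g | ∃ j : Fin (ℓ + 2), 2 ≤ (j : ℕ) ∧ g = FreeGroup.of j}))
    (hK : K = Subgroup.closure {x₁, x₂}) :
    H ⊓ K = Subgroup.closure
      {g | ∃ i : ℕ, i ≤ v - 2 ∧ g = x₁ ^ (i : ℤ) * x₂ * x₁ ^ (-((i : ℤ) + 1))} := by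
  set S₁ : Set (FreeGroup (Fin (ℓ + 2))) :=
    {g | ∃ i : ℕ, i ≤ v - 2 ∧ g = x₁ ^ (i : ℤ) * x₂ * x₁ ^ (-((i : ℤ) + 1))} with hS₁
  set S₂ : Set (FreeGroup (Fin (ℓ + 2))) :=
    {g | ∃ j : Fin (ℓ + 2), 2 ≤ (j : ℕ) ∧ g = FreeGroup.of j} with hS₂
  -- the retraction killing x₃, …, x_{ℓ+2}
  let φ : FreeGroup (Fin (ℓ + 2)) →* FreeGroup (Fin (ℓ + 2)) :=
    FreeGroup.lift (fun j => if (j : ℕ) ≤ 1 then FreeGroup.of j else 1)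
  have hφ1 : φ x₁ = x₁ := by simp [φ, hx₁]
  have hφ2 : φ x₂ = x₂ := by simp [φ, hx₂]
  apply le_antisymm
  · rintro g ⟨hgH, hgK⟩
    -- φ fixes g since g ∈ K
    have hfix : φ g = g := by
      have hle : Subgroup.closure {x₁, x₂} ≤ φ.eqLocus (MonoidHom.id _) := by
        rw [Subgroup.closure_le]
        rintro y (rfl | rfl)
        · exact hφ1
        · exact hφ2
      exact hle (hK ▸ hgK)
    -- φ g lies in the closure of S₁
    have hmem : φ g ∈ Subgroup.closure S₁ := by
      have h1 : φ g ∈ (Subgroup.closure (S₁ ∪ S₂)).map φ :=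
        ⟨g, hH ▸ hgH, rfl⟩
      rw [MonoidHom.map_closure] at h1
      refine (Subgroup.closure_le _).mpr ?_ h1
      rintro _ ⟨y, hy, rfl⟩
      rcases hy with ⟨i, hi, rfl⟩ | ⟨j, hj, rfl⟩
      · have : φ (x₁ ^ (i : ℤ) * x₂ * x₁ ^ (-((i : ℤ) + 1))) =
            x₁ ^ (i : ℤ) * x₂ * x₁ ^ (-((i : ℤ) + 1)) := by
          simp [map_mul, map_zpow, hφ1, hφ2]
        rw [this]
        exact Subgroup.subset_closure ⟨i, hi, rfl⟩
      · have : φ (FreeGroup.of j) = 1 := by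
          simp only [φ, FreeGroup.lift_apply_of]
          rw [if_neg (by omega)]
        rw [this]
        exact (Subgroup.closure S₁).one_mem
    rwa [hfix] at hmem
  · refine le_inf ?_ ?_
    · rw [hH]
      exact Subgroup.closure_mono Set.subset_union_left
    · rw [hK, Subgroup.closure_le]
      rintro _ ⟨i, hi, rfl⟩
      have h1 : x₁ ∈ Subgroup.closure ({x₁, x₂} : Set (FreeGroup (Fin (ℓ + 2)))) :=
        Subgroup.subset_closure (by simp)
      have h2 : x₂ ∈ Subgroup.closure ({x₁, x₂} : Set (FreeGroup (Fin (ℓ + 2)))) :=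
        Subgroup.subset_closure (by simp)
      exact Subgroup.mul_mem _ (Subgroup.mul_mem _ (Subgroup.zpow_mem _ h1 _) h2)
        (Subgroup.zpow_mem _ h1 _)
end

section
/- Let F be the free group on six generators a, b, c, d, x, y. Let H be the subgroup generated by {a, b, x, y², y x y⁻¹} and K the subgroup generated by {c, d, y, x², x y x⁻¹}. Then H ∩ K is the subgroup generated by {y², y x² y⁻¹, x², y x y⁻¹ x, y x y x}. -/
namespace GuzmanAux

abbrev F6 := FreeGroup (Fin 6)

def X : F6 := FreeGroup.of 4
def Y : F6 := FreeGroup.of 5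

def J : Subgroup F6 :=
  Subgroup.closure {Y ^ 2, Y * X ^ 2 * Y⁻¹, X ^ 2, Y * X * Y⁻¹ * X, Y * X * Y * X}

def L : Subgroup F6 := Subgroup.closure {X, Y}

lemma mg1 : Y^2 ∈ J := Subgroup.subset_closure (by simp)
lemma mg2 : Y*X^2*Y⁻¹ ∈ J := Subgroup.subset_closure (by simp)
lemma mg3 : X^2 ∈ J := Subgroup.subset_closure (by simp)
lemma mg4 : Y*X*Y⁻¹*X ∈ J := Subgroup.subset_closure (by simp)
lemma mg5 : Y*X*Y*X ∈ J := Subgroup.subset_closure (by simp)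

lemma mX : X ∈ L := Subgroup.subset_closure (by simp)
lemma mY : Y ∈ L := Subgroup.subset_closure (by simp)

lemma conj_x_g1 : X * (Y^2) * X⁻¹ ∈ J := by
  have h : X * (Y^2) * X⁻¹ = (X^2) * (Y*X*Y⁻¹*X)⁻¹ * (Y*X*Y*X) * (X^2)⁻¹ := by simp only [pow_two]; group
  rw [h]; exact (mul_mem (mul_mem (mul_mem mg3 (inv_mem mg4)) mg5) (inv_mem mg3))

lemma conj_x_g2 : X * (Y*X^2*Y⁻¹) * X⁻¹ ∈ J := by
  have h : X * (Y*X^2*Y⁻¹) * X⁻¹ = (X^2) * (Y*X*Y⁻¹*X)⁻¹ * (Y*X^2*Y⁻¹) * (Y*X*Y⁻¹*X) * (X^2)⁻¹ := by simp only [pow_two]; group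
  rw [h]; exact (mul_mem (mul_mem (mul_mem (mul_mem mg3 (inv_mem mg4)) mg2) mg4) (inv_mem mg3))

lemma conj_x_g3 : X * (X^2) * X⁻¹ ∈ J := by
  have h : X * (X^2) * X⁻¹ = (X^2) := by simp only [pow_two]; group
  rw [h]; exact mg3

lemma conj_x_g4 : X * (Y*X*Y⁻¹*X) * X⁻¹ ∈ J := by
  have h : X * (Y*X*Y⁻¹*X) * X⁻¹ = (X^2) * (Y*X*Y⁻¹*X)⁻¹ * (Y*X^2*Y⁻¹) := by simp only [pow_two]; group
  rw [h]; exact (mul_mem (mul_mem mg3 (inv_mem mg4)) mg2)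

lemma conj_x_g5 : X * (Y*X*Y*X) * X⁻¹ ∈ J := by
  have h : X * (Y*X*Y*X) * X⁻¹ = (X^2) * (Y*X*Y⁻¹*X)⁻¹ * (Y*X^2*Y⁻¹) * (Y^2) := by simp only [pow_two]; group
  rw [h]; exact (mul_mem (mul_mem (mul_mem mg3 (inv_mem mg4)) mg2) mg1)

lemma conj_xi_g1 : X⁻¹ * (Y^2) * X⁻¹⁻¹ ∈ J := by
  have h : X⁻¹ * (Y^2) * X⁻¹⁻¹ = (Y*X*Y⁻¹*X)⁻¹ * (Y*X*Y*X) := by simp only [pow_two]; group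
  rw [h]; exact (mul_mem (inv_mem mg4) mg5)

lemma conj_xi_g2 : X⁻¹ * (Y*X^2*Y⁻¹) * X⁻¹⁻¹ ∈ J := by
  have h : X⁻¹ * (Y*X^2*Y⁻¹) * X⁻¹⁻¹ = (Y*X*Y⁻¹*X)⁻¹ * (Y*X^2*Y⁻¹) * (Y*X*Y⁻¹*X) := by simp only [pow_two]; group
  rw [h]; exact (mul_mem (mul_mem (inv_mem mg4) mg2) mg4)

lemma conj_xi_g3 : X⁻¹ * (X^2) * X⁻¹⁻¹ ∈ J := by
  have h : X⁻¹ * (X^2) * X⁻¹⁻¹ = (X^2) := by simp only [pow_two]; group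
  rw [h]; exact mg3

lemma conj_xi_g4 : X⁻¹ * (Y*X*Y⁻¹*X) * X⁻¹⁻¹ ∈ J := by
  have h : X⁻¹ * (Y*X*Y⁻¹*X) * X⁻¹⁻¹ = (Y*X*Y⁻¹*X)⁻¹ * (Y*X^2*Y⁻¹) * (X^2) := by simp only [pow_two]; group
  rw [h]; exact (mul_mem (mul_mem (inv_mem mg4) mg2) mg3)

lemma conj_xi_g5 : X⁻¹ * (Y*X*Y*X) * X⁻¹⁻¹ ∈ J := by
  have h : X⁻¹ * (Y*X*Y*X) * X⁻¹⁻¹ = (Y*X*Y⁻¹*X)⁻¹ * (Y*X^2*Y⁻¹) * (Y^2) * (X^2) := by simp only [pow_two]; group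
  rw [h]; exact (mul_mem (mul_mem (mul_mem (inv_mem mg4) mg2) mg1) mg3)

lemma conj_y_g1 : Y * (Y^2) * Y⁻¹ ∈ J := by
  have h : Y * (Y^2) * Y⁻¹ = (Y^2) := by simp only [pow_two]; group
  rw [h]; exact mg1

lemma conj_y_g2 : Y * (Y*X^2*Y⁻¹) * Y⁻¹ ∈ J := by
  have h : Y * (Y*X^2*Y⁻¹) * Y⁻¹ = (Y^2) * (X^2) * (Y^2)⁻¹ := by simp only [pow_two]; group
  rw [h]; exact (mul_mem (mul_mem mg1 mg3) (inv_mem mg1))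

lemma conj_y_g3 : Y * (X^2) * Y⁻¹ ∈ J := by
  have h : Y * (X^2) * Y⁻¹ = (Y*X^2*Y⁻¹) := by rfl
  rw [h]; exact mg2

lemma conj_y_g4 : Y * (Y*X*Y⁻¹*X) * Y⁻¹ ∈ J := by
  have h : Y * (Y*X*Y⁻¹*X) * Y⁻¹ = (Y^2) * (X^2) * (Y*X*Y*X)⁻¹ * (Y*X^2*Y⁻¹) := by simp only [pow_two]; group
  rw [h]; exact (mul_mem (mul_mem (mul_mem mg1 mg3) (inv_mem mg5)) mg2)

lemma conj_y_g5 : Y * (Y*X*Y*X) * Y⁻¹ ∈ J := by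
  have h : Y * (Y*X*Y*X) * Y⁻¹ = (Y^2) * (X^2) * (Y*X*Y⁻¹*X)⁻¹ * (Y*X^2*Y⁻¹) := by simp only [pow_two]; group
  rw [h]; exact (mul_mem (mul_mem (mul_mem mg1 mg3) (inv_mem mg4)) mg2)

lemma conj_yi_g1 : Y⁻¹ * (Y^2) * Y⁻¹⁻¹ ∈ J := by
  have h : Y⁻¹ * (Y^2) * Y⁻¹⁻¹ = (Y^2) := by simp only [pow_two]; group
  rw [h]; exact mg1

lemma conj_yi_g2 : Y⁻¹ * (Y*X^2*Y⁻¹) * Y⁻¹⁻¹ ∈ J := by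
  have h : Y⁻¹ * (Y*X^2*Y⁻¹) * Y⁻¹⁻¹ = (X^2) := by simp only [pow_two]; group
  rw [h]; exact mg3

lemma conj_yi_g3 : Y⁻¹ * (X^2) * Y⁻¹⁻¹ ∈ J := by
  have h : Y⁻¹ * (X^2) * Y⁻¹⁻¹ = (Y^2)⁻¹ * (Y*X^2*Y⁻¹) * (Y^2) := by simp only [pow_two]; group
  rw [h]; exact (mul_mem (mul_mem (inv_mem mg1) mg2) mg1)

lemma conj_yi_g4 : Y⁻¹ * (Y*X*Y⁻¹*X) * Y⁻¹⁻¹ ∈ J := by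
  have h : Y⁻¹ * (Y*X*Y⁻¹*X) * Y⁻¹⁻¹ = (X^2) * (Y*X*Y*X)⁻¹ * (Y*X^2*Y⁻¹) * (Y^2) := by simp only [pow_two]; group
  rw [h]; exact (mul_mem (mul_mem (mul_mem mg3 (inv_mem mg5)) mg2) mg1)

lemma conj_yi_g5 : Y⁻¹ * (Y*X*Y*X) * Y⁻¹⁻¹ ∈ J := by
  have h : Y⁻¹ * (Y*X*Y*X) * Y⁻¹⁻¹ = (X^2) * (Y*X*Y⁻¹*X)⁻¹ * (Y*X^2*Y⁻¹) * (Y^2) := by simp only [pow_two]; group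
  rw [h]; exact (mul_mem (mul_mem (mul_mem mg3 (inv_mem mg4)) mg2) mg1)
lemma memJ_of_eq {u v : F6} (h : u = v) (hv : v ∈ J) : u ∈ J := h ▸ hv

lemma conj_of (t : F6)
    (h1 : t * (Y^2) * t⁻¹ ∈ J) (h2 : t * (Y*X^2*Y⁻¹) * t⁻¹ ∈ J)
    (h3 : t * (X^2) * t⁻¹ ∈ J) (h4 : t * (Y*X*Y⁻¹*X) * t⁻¹ ∈ J)
    (h5 : t * (Y*X*Y*X) * t⁻¹ ∈ J) :
    ∀ w ∈ J, t * w * t⁻¹ ∈ J := by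
  intro w hw
  induction hw using Subgroup.closure_induction with
  | mem g hg =>
    simp only [Set.mem_insert_iff, Set.mem_singleton_iff] at hg
    rcases hg with rfl | rfl | rfl | rfl | rfl
    · exact h1
    · exact h2
    · exact h3
    · exact h4
    · exact h5
  | one => exact memJ_of_eq (v := 1) (by group) (one_mem J)
  | mul u v hu hv ihu ihv =>
    exact memJ_of_eq (v := (t * u * t⁻¹) * (t * v * t⁻¹)) (by group) (mul_mem ihu ihv)
  | inv u hu ihu =>
    exact memJ_of_eq (v := (t * u * t⁻¹)⁻¹) (by group) (inv_mem ihu)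

lemma conjL : ∀ t ∈ L, ∀ w ∈ J, t * w * t⁻¹ ∈ J := by
  have main : ∀ t ∈ L, (∀ w ∈ J, t * w * t⁻¹ ∈ J) ∧ (∀ w ∈ J, t⁻¹ * w * t⁻¹⁻¹ ∈ J) := by
    intro t ht
    induction ht using Subgroup.closure_induction with
    | mem g hg =>
      simp only [Set.mem_insert_iff, Set.mem_singleton_iff] at hg
      rcases hg with rfl | rfl
      · exact ⟨conj_of X conj_x_g1 conj_x_g2 conj_x_g3 conj_x_g4 conj_x_g5,
          conj_of X⁻¹ conj_xi_g1 conj_xi_g2 conj_xi_g3 conj_xi_g4 conj_xi_g5⟩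
      · exact ⟨conj_of Y conj_y_g1 conj_y_g2 conj_y_g3 conj_y_g4 conj_y_g5,
          conj_of Y⁻¹ conj_yi_g1 conj_yi_g2 conj_yi_g3 conj_yi_g4 conj_yi_g5⟩
    | one =>
      exact ⟨fun w hw => memJ_of_eq (by group) hw, fun w hw => memJ_of_eq (by group) hw⟩
    | mul u v hu hv ihu ihv =>
      constructor <;> intro w hw
      · exact memJ_of_eq (v := u * (v * w * v⁻¹) * u⁻¹) (by group) (ihu.1 _ (ihv.1 w hw))
      · exact memJ_of_eq (v := v⁻¹ * (u⁻¹ * w * u⁻¹⁻¹) * v⁻¹⁻¹) (by group) (ihv.2 _ (ihu.2 w hw))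
    | inv u hu ihu =>
      refine ⟨ihu.2, fun w hw => ?_⟩
      exact memJ_of_eq (v := u * w * u⁻¹) (by group) (ihu.1 w hw)
  exact fun t ht => (main t ht).1

def π1 : F6 →* Multiplicative (ZMod 2) :=
  FreeGroup.lift (fun i => if i = 4 then Multiplicative.ofAdd 1 else 1)

def π2 : F6 →* Multiplicative (ZMod 2) :=
  FreeGroup.lift (fun i => if i = 5 then Multiplicative.ofAdd 1 else 1)

def σ (p q : Multiplicative (ZMod 2)) : F6 :=
  Y ^ (Multiplicative.toAdd q).val * X ^ (Multiplicative.toAdd p).val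

lemma two : ∀ r : Multiplicative (ZMod 2), r = 1 ∨ r = Multiplicative.ofAdd 1 := by decide
lemma z0 : (0 : ZMod 2).val = 0 := rfl
lemma z1 : (1 : ZMod 2).val = 1 := rfl
lemma z11 : (1 + 1 : ZMod 2) = 0 := by decide
lemma invr : ∀ r : Multiplicative (ZMod 2), r⁻¹ = r := by decide

lemma σ11 : σ 1 1 = 1 := by simp [σ, z0]

lemma sigma_mem (p q : Multiplicative (ZMod 2)) : σ p q ∈ L :=
  mul_mem (pow_mem mY _) (pow_mem mX _)

lemma sigma_sq (p q : Multiplicative (ZMod 2)) : σ p q * σ p q ∈ J := by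
  rcases two p with rfl | rfl <;> rcases two q with rfl | rfl <;>
    simp only [σ, toAdd_one, toAdd_ofAdd, z0, z1, pow_zero, pow_one, one_mul, mul_one] <;>
    first
    | exact one_mem J
    | (refine memJ_of_eq ?_ mg3; (try rw [pow_two]); (try group); done)
    | (refine memJ_of_eq ?_ mg1; (try rw [pow_two]); (try group); done)
    | (refine memJ_of_eq ?_ mg5; (try rw [pow_two]); (try group); done)

lemma cocyc (p q p' q' : Multiplicative (ZMod 2)) :
    σ p q * σ p' q' * (σ (p * p') (q * q'))⁻¹ ∈ J := by
  rcases two p with rfl | rfl <;> rcases two q with rfl | rfl <;>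
    rcases two p' with rfl | rfl <;> rcases two q' with rfl | rfl <;>
    simp only [σ, toAdd_one, toAdd_ofAdd, toAdd_mul, z0, z1, z11, one_mul, mul_one,
      pow_zero, pow_one, inv_one, mul_inv_cancel] <;>
    first
    | exact one_mem J
    | (refine memJ_of_eq ?_ mg3; (try rw [pow_two]); (try group); done)
    | (refine memJ_of_eq ?_ mg1; (try rw [pow_two]); (try group); done)
    | (refine memJ_of_eq ?_ mg2; (try rw [pow_two]); (try group); done)
    | (refine memJ_of_eq ?_ mg5; (try rw [pow_two]); (try group); done)
    | (refine memJ_of_eq ?_ (mul_mem mg3 (inv_mem mg4)); (try group); done)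
    | (refine memJ_of_eq ?_ (mul_mem (mul_mem mg3 (inv_mem mg4)) mg2); (try group); done)
    | (refine memJ_of_eq ?_ (mul_mem mg5 (inv_mem mg3)); (try group); done)

lemma p1X : π1 X = Multiplicative.ofAdd 1 := by simp [π1, X]
lemma p2X : π2 X = 1 := by simp [π2, X]
lemma p1Y : π1 Y = 1 := by simp [π1, Y]
lemma p2Y : π2 Y = Multiplicative.ofAdd 1 := by simp [π2, Y]

lemma key : ∀ w ∈ L, w * (σ (π1 w) (π2 w))⁻¹ ∈ J := by
  intro w hw
  induction hw using Subgroup.closure_induction with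
  | mem g hg =>
    simp only [Set.mem_insert_iff, Set.mem_singleton_iff] at hg
    rcases hg with rfl | rfl
    · rw [p1X, p2X]
      have h : σ (Multiplicative.ofAdd 1) 1 = X := by
        simp [σ, toAdd_one, toAdd_ofAdd, z0, z1]
      rw [h]
      exact memJ_of_eq (v := 1) (by group) (one_mem J)
    · rw [p1Y, p2Y]
      have h : σ 1 (Multiplicative.ofAdd 1) = Y := by
        simp [σ, toAdd_one, toAdd_ofAdd, z0, z1]
      rw [h]
      exact memJ_of_eq (v := 1) (by group) (one_mem J)
  | one =>
    rw [map_one, map_one, σ11]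
    exact memJ_of_eq (v := 1) (by group) (one_mem J)
  | mul u v hu hv ihu ihv =>
    rw [map_mul, map_mul]
    exact memJ_of_eq
      (v := (u * (σ (π1 u) (π2 u))⁻¹) *
        (σ (π1 u) (π2 u) * (v * (σ (π1 v) (π2 v))⁻¹) * (σ (π1 u) (π2 u))⁻¹) *
        (σ (π1 u) (π2 u) * σ (π1 v) (π2 v) * (σ (π1 u * π1 v) (π2 u * π2 v))⁻¹))
      (by group)
      (mul_mem (mul_mem ihu (conjL _ (sigma_mem _ _) _ ihv)) (cocyc _ _ _ _))
  | inv u hu ihu =>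
    rw [map_inv, map_inv, invr, invr]
    exact memJ_of_eq
      (v := ((σ (π1 u) (π2 u))⁻¹ * (u * (σ (π1 u) (π2 u))⁻¹)⁻¹ * (σ (π1 u) (π2 u))⁻¹⁻¹) *
        (σ (π1 u) (π2 u) * σ (π1 u) (π2 u))⁻¹)
      (by group)
      (mul_mem (conjL _ (inv_mem (sigma_mem _ _)) _ (inv_mem ihu)) (inv_mem (sigma_sq _ _)))

def A : F6 := FreeGroup.of 0
def B : F6 := FreeGroup.of 1
def C : F6 := FreeGroup.of 2
def D : F6 := FreeGroup.of 3

def r1 : F6 →* F6 :=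
  FreeGroup.lift (fun i => if i = 2 ∨ i = 3 then 1 else FreeGroup.of i)

lemma H_fix : ∀ w ∈ Subgroup.closure {A, B, X, Y^2, Y*X*Y⁻¹}, r1 w = w := by
  intro w hw
  induction hw using Subgroup.closure_induction with
  | mem g hg =>
    simp only [Set.mem_insert_iff, Set.mem_singleton_iff] at hg
    rcases hg with rfl | rfl | rfl | rfl | rfl <;>
      simp [r1, A, B, X, Y]
  | one => exact map_one r1
  | mul u v hu hv ihu ihv => rw [map_mul, ihu, ihv]
  | inv u hu ihu => rw [map_inv, ihu]

lemma K_r1 : ∀ w ∈ Subgroup.closure {C, D, Y, X^2, X*Y*X⁻¹}, r1 w ∈ L := by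
  intro w hw
  induction hw using Subgroup.closure_induction with
  | mem g hg =>
    simp only [Set.mem_insert_iff, Set.mem_singleton_iff] at hg
    rcases hg with rfl | rfl | rfl | rfl | rfl
    · have h : r1 C = 1 := by simp [r1, C]
      rw [h]; exact one_mem L
    · have h : r1 D = 1 := by simp [r1, D]
      rw [h]; exact one_mem L
    · have h : r1 Y = Y := by simp [r1, Y]
      rw [h]; exact mY
    · have h : r1 (X^2) = X^2 := by simp [r1, X]
      rw [h]; exact pow_mem mX 2
    · have h : r1 (X*Y*X⁻¹) = X*Y*X⁻¹ := by simp [r1, X, Y]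
      rw [h]; exact mul_mem (mul_mem mX mY) (inv_mem mX)
  | one => rw [map_one]; exact one_mem L
  | mul u v hu hv ihu ihv => rw [map_mul]; exact mul_mem ihu ihv
  | inv u hu ihu => rw [map_inv]; exact inv_mem ihu

lemma H_pi2 : ∀ w ∈ Subgroup.closure {A, B, X, Y^2, Y*X*Y⁻¹}, π2 w = 1 := by
  intro w hw
  induction hw using Subgroup.closure_induction with
  | mem g hg =>
    simp only [Set.mem_insert_iff, Set.mem_singleton_iff] at hg
    rcases hg with rfl | rfl | rfl | rfl | rfl <;>
      simp [π2, A, B, X, Y, map_pow, map_mul, map_inv] <;> decide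
  | one => exact map_one π2
  | mul u v hu hv ihu ihv => rw [map_mul, ihu, ihv, one_mul]
  | inv u hu ihu => rw [map_inv, ihu, inv_one]

lemma K_pi1 : ∀ w ∈ Subgroup.closure {C, D, Y, X^2, X*Y*X⁻¹}, π1 w = 1 := by
  intro w hw
  induction hw using Subgroup.closure_induction with
  | mem g hg =>
    simp only [Set.mem_insert_iff, Set.mem_singleton_iff] at hg
    rcases hg with rfl | rfl | rfl | rfl | rfl <;>
      simp [π1, C, D, X, Y, map_pow, map_mul, map_inv] <;> decide
  | one => exact map_one π1
  | mul u v hu hv ihu ihv => rw [map_mul, ihu, ihv, one_mul]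
  | inv u hu ihu => rw [map_inv, ihu, inv_one]


lemma memc {S : Set F6} {u v : F6} (h : u = v) (hv : v ∈ Subgroup.closure S) :
    u ∈ Subgroup.closure S := h ▸ hv

lemma mH1 : Y^2 ∈ Subgroup.closure {A, B, X, Y^2, Y*X*Y⁻¹} :=
  Subgroup.subset_closure (by simp)
lemma mHZ : Y*X*Y⁻¹ ∈ Subgroup.closure {A, B, X, Y^2, Y*X*Y⁻¹} :=
  Subgroup.subset_closure (by simp)
lemma mHX : X ∈ Subgroup.closure {A, B, X, Y^2, Y*X*Y⁻¹} :=
  Subgroup.subset_closure (by simp)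
lemma mH2 : Y*X^2*Y⁻¹ ∈ Subgroup.closure {A, B, X, Y^2, Y*X*Y⁻¹} :=
  memc (v := (Y*X*Y⁻¹)*(Y*X*Y⁻¹)) (by simp only [pow_two]; group) (mul_mem mHZ mHZ)
lemma mH3 : X^2 ∈ Subgroup.closure {A, B, X, Y^2, Y*X*Y⁻¹} := pow_mem mHX 2
lemma mH4 : Y*X*Y⁻¹*X ∈ Subgroup.closure {A, B, X, Y^2, Y*X*Y⁻¹} :=
  mul_mem mHZ mHX
lemma mH5 : Y*X*Y*X ∈ Subgroup.closure {A, B, X, Y^2, Y*X*Y⁻¹} :=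
  memc (v := (Y*X*Y⁻¹)*(Y^2)*X) (by simp only [pow_two]; group)
    (mul_mem (mul_mem mHZ mH1) mHX)

lemma mKY : Y ∈ Subgroup.closure {C, D, Y, X^2, X*Y*X⁻¹} :=
  Subgroup.subset_closure (by simp)
lemma mKX2 : X^2 ∈ Subgroup.closure {C, D, Y, X^2, X*Y*X⁻¹} :=
  Subgroup.subset_closure (by simp)
lemma mKW : X*Y*X⁻¹ ∈ Subgroup.closure {C, D, Y, X^2, X*Y*X⁻¹} :=
  Subgroup.subset_closure (by simp)
lemma mK1 : Y^2 ∈ Subgroup.closure {C, D, Y, X^2, X*Y*X⁻¹} := pow_mem mKY 2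
lemma mK2 : Y*X^2*Y⁻¹ ∈ Subgroup.closure {C, D, Y, X^2, X*Y*X⁻¹} :=
  mul_mem (mul_mem mKY mKX2) (inv_mem mKY)
lemma mK3 : X^2 ∈ Subgroup.closure {C, D, Y, X^2, X*Y*X⁻¹} := mKX2
lemma mK4 : Y*X*Y⁻¹*X ∈ Subgroup.closure {C, D, Y, X^2, X*Y*X⁻¹} :=
  memc (v := Y*(X*Y*X⁻¹)⁻¹*(X^2)) (by simp only [pow_two]; group)
    (mul_mem (mul_mem mKY (inv_mem mKW)) mKX2)
lemma mK5 : Y*X*Y*X ∈ Subgroup.closure {C, D, Y, X^2, X*Y*X⁻¹} :=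
  memc (v := Y*(X*Y*X⁻¹)*(X^2)) (by simp only [pow_two]; group)
    (mul_mem (mul_mem mKY mKW) mKX2)

end GuzmanAux

open GuzmanAux in
/-- In the free group on `a, b, c, d, x, y`, with `H = ⟨a, b, x, y², yxy⁻¹⟩` and
`K = ⟨c, d, y, x², xyx⁻¹⟩`, the intersection `H ∩ K` is generated by
`{y², yx²y⁻¹, x², yxy⁻¹x, yxyx}`. -/
theorem guzman_inf_eq (a b c d x y : FreeGroup (Fin 6))
    (ha : a = FreeGroup.of 0) (hb : b = FreeGroup.of 1)
    (hc : c = FreeGroup.of 2) (hd : d = FreeGroup.of 3)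
    (hx : x = FreeGroup.of 4) (hy : y = FreeGroup.of 5)
    (H K : Subgroup (FreeGroup (Fin 6)))
    (hH : H = Subgroup.closure {a, b, x, y ^ 2, y * x * y⁻¹})
    (hK : K = Subgroup.closure {c, d, y, x ^ 2, x * y * x⁻¹}) :
    H ⊓ K = Subgroup.closure
      {y ^ 2, y * x ^ 2 * y⁻¹, x ^ 2, y * x * y⁻¹ * x, y * x * y * x} := by
  subst ha hb hc hd hx hy hH hK
  apply le_antisymm
  · intro w hw
    rw [Subgroup.mem_inf] at hw
    obtain ⟨hwH, hwK⟩ := hw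
    have hwH' : w ∈ Subgroup.closure {A, B, X, Y^2, Y*X*Y⁻¹} := hwH
    have hwK' : w ∈ Subgroup.closure {C, D, Y, X^2, X*Y*X⁻¹} := hwK
    have hwL : w ∈ L := by
      have h1 := H_fix w hwH'
      have h2 := K_r1 w hwK'
      rwa [h1] at h2
    have h1 : π1 w = 1 := K_pi1 w hwK'
    have h2 : π2 w = 1 := H_pi2 w hwH'
    have hk := key w hwL
    rw [h1, h2, σ11, inv_one, mul_one] at hk
    exact hk
  · refine le_inf ((Subgroup.closure_le _).2 ?_) ((Subgroup.closure_le _).2 ?_)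
    · rintro g (rfl | rfl | rfl | rfl | rfl)
      · exact mH1
      · exact mH2
      · exact mH3
      · exact mH4
      · exact mH5
    · rintro g (rfl | rfl | rfl | rfl | rfl)
      · exact mK1
      · exact mK2
      · exact mK3
      · exact mK4
      · exact mK5
end
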